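/- Let N ≤ s be positive integers, A and C invertible real N×N matrices, and W a real s×N matrix with WᵀW = I_N; set K = AWᵀ. Fix 0 < ρ < 1/2, set τ = (1+2ρ)/(1−2ρ), fix q ∈ (2ρ, 1), and assume ‖(C − A)v‖ ≤ ρ‖Av‖ for all v ∈ ℝ^N. Let μ : [0,∞) → [0,∞) be continuous with μ(0) = 0, and assume that for every δ > 0, ‖CWᵀ(u − S_{μ(δ)}(u))‖ ≤ ρδ for all u ∈ ℝ^s. Let x ∈ ℝ^s, g = Kx, and let z⁰ ∈ ℝ^s be a fixed starting vector that is not a solution of Kz = g. Let (δ_m) be a sequence of positive reals with δ_m → 0, and for each m let g^{δ_m} ∈ ℝ^N satisfy ‖g^{δ_m} − g‖ ≤ δ_m. For each m run the iteration: starting from z⁰ (with threshold μ(δ_m)), while ‖r^n‖ > τδ_m, where r^n = g^{δ_m} − K·S_{μ(δ_m)}(z^n), choose α_n > 0 with α_n‖(CCᵀ + α_n I)⁻¹ r^n‖ = q_n‖r^n‖ for τ_n = ‖r^n‖/δ_m and q_n = max{q, 2ρ + (1+ρ)/τ_n}, and set z^{n+1} = z^n + WCᵀ(CCᵀ + α_n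 I)⁻¹ r^n; let n(δ_m) be the first index with ‖r^{n(δ_m)}‖ ≤ τδ_m. Then the sequence x^{n(δ_m)}_{δ_m} = S_{μ(δ_m)}(z^{n(δ_m)}_{δ_m}) converges, as m → ∞, to the solution of Kz = g that is closest to z⁰ in the Euclidean norm. -/

import Mathlib

open Matrix Filter

/-- Soft-thresholding operator acting componentwise:
`S_μ(u)_i = sgn(u_i) · max(|u_i| − μ, 0)`. -/
noncomputable def soft {s : ℕ} (μ : ℝ) (u : EuclideanSpace ℝ (Fin s)) : EuclideanSpace ℝ (Fin s) :=
  WithLp.toLp 2 (fun i => Real.sign (u i) * max (|u i| - μ) 0)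

/-- Matrix-vector multiplication as a map between Euclidean spaces. -/
noncomputable def mulVecE {m n : ℕ} (A : Matrix (Fin m) (Fin n) ℝ)
    (v : EuclideanSpace ℝ (Fin n)) : EuclideanSpace ℝ (Fin m) :=
  WithLp.toLp 2 (A.mulVec v)

/-- The spectral norm of a real matrix: the operator norm induced by Euclidean vector norms. -/
noncomputable def specNorm {m n : ℕ} (A : Matrix (Fin m) (Fin n) ℝ) : ℝ :=
  ‖(Matrix.toEuclideanLin A).toContinuousLinearMap‖

/-- The ℓ¹-norm of a vector. -/
noncomputable def l1norm {s : ℕ} (u : EuclideanSpace ℝ (Fin s)) : ℝ := ∑ i, |u i|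

section aux
variable {m n k : ℕ}

lemma mulVecE_mul (M : Matrix (Fin m) (Fin n) ℝ) (P : Matrix (Fin n) (Fin k) ℝ)
    (v : EuclideanSpace ℝ (Fin k)) : mulVecE (M * P) v = mulVecE M (mulVecE P v) := by
  simp only [mulVecE, WithLp.ofLp_toLp, Matrix.mulVec_mulVec]

lemma mulVecE_one (v : EuclideanSpace ℝ (Fin n)) :
    mulVecE (1 : Matrix (Fin n) (Fin n) ℝ) v = v := by
  simp [mulVecE]

lemma mulVecE_add (M : Matrix (Fin m) (Fin n) ℝ) (u v : EuclideanSpace ℝ (Fin n)) :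
    mulVecE M (u + v) = mulVecE M u + mulVecE M v := by
  ext i
  simp [mulVecE, Matrix.mulVec, dotProduct, mul_add, Finset.sum_add_distrib]

lemma mulVecE_sub (M : Matrix (Fin m) (Fin n) ℝ) (u v : EuclideanSpace ℝ (Fin n)) :
    mulVecE M (u - v) = mulVecE M u - mulVecE M v := by
  ext i
  simp [mulVecE, Matrix.mulVec, dotProduct, mul_sub, Finset.sum_sub_distrib]

lemma mulVecE_zero (M : Matrix (Fin m) (Fin n) ℝ) :
    mulVecE M (0 : EuclideanSpace ℝ (Fin n)) = 0 := by
  ext i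
  simp [mulVecE, Matrix.mulVec, dotProduct]

lemma mulVecE_norm_le (M : Matrix (Fin m) (Fin n) ℝ) (v : EuclideanSpace ℝ (Fin n)) :
    ‖mulVecE M v‖ ≤ specNorm M * ‖v‖ := by
  have h : mulVecE M v = (Matrix.toEuclideanLin M).toContinuousLinearMap v := rfl
  rw [h]
  exact (Matrix.toEuclideanLin M).toContinuousLinearMap.le_opNorm v

lemma inner_mulVecE (M : Matrix (Fin m) (Fin n) ℝ) (u : EuclideanSpace ℝ (Fin m))
    (v : EuclideanSpace ℝ (Fin n)) :
    inner (𝕜 := ℝ) u (mulVecE M v) = inner (𝕜 := ℝ) (mulVecE Mᵀ u) v := by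
  simp only [PiLp.inner_apply, RCLike.inner_apply, conj_trivial, mulVecE, Matrix.mulVec,
    dotProduct, WithLp.ofLp_toLp, Matrix.transpose_apply, Finset.mul_sum, Finset.sum_mul]
  rw [Finset.sum_comm]
  exact Finset.sum_congr rfl fun j _ => Finset.sum_congr rfl fun i _ => by ring

lemma abs_soft_coord (μt t : ℝ) (hμ : 0 ≤ μt) :
    |Real.sign t * max (|t| - μt) 0 - t| ≤ μt := by
  rcases le_or_gt (|t|) μt with h | h
  · rw [max_eq_right (by linarith), mul_zero, zero_sub, abs_neg]; exact h
  · rw [max_eq_left (by linarith)]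
    rcases lt_trichotomy t 0 with h' | h' | h'
    · rw [Real.sign_of_neg h', abs_of_neg h']
      rw [show (-1 : ℝ) * (-t - μt) - t = μt by ring, abs_of_nonneg hμ]
    · subst h'; simp at h; linarith
    · rw [Real.sign_of_pos h', abs_of_pos h']
      rw [show (1 : ℝ) * (t - μt) - t = -μt by ring, abs_neg, abs_of_nonneg hμ]

lemma norm_soft_sub_le {s : ℕ} (μt : ℝ) (hμ : 0 ≤ μt) (u : EuclideanSpace ℝ (Fin s)) :
    ‖soft μt u - u‖ ≤ Real.sqrt s * μt := by
  rw [EuclideanSpace.norm_eq]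
  have key : ∀ i, ‖(soft μt u - u) i‖ ^ 2 ≤ μt ^ 2 := by
    intro i
    have h1 : (soft μt u - u) i = Real.sign (u i) * max (|u i| - μt) 0 - u i := rfl
    rw [h1, Real.norm_eq_abs]
    have h2 := abs_soft_coord μt (u i) hμ
    have h3 := abs_nonneg (Real.sign (u i) * max (|u i| - μt) 0 - u i)
    nlinarith
  calc Real.sqrt (∑ i, ‖(soft μt u - u) i‖ ^ 2)
      ≤ Real.sqrt (∑ _i : Fin s, μt ^ 2) :=
        Real.sqrt_le_sqrt (Finset.sum_le_sum fun i _ => key i)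
    _ = Real.sqrt ((s : ℝ) * μt ^ 2) := by
        rw [Finset.sum_const, Finset.card_univ, Fintype.card_fin, nsmul_eq_mul]
    _ = Real.sqrt s * μt := by
        rw [Real.sqrt_mul (by positivity), Real.sqrt_sq hμ]

end aux

/-- Theorem 5 of the paper (convergence and regularization of Algorithm 4--NS):
as the noise levels `δ_m → 0`, the outputs `x^{n(δ_m)}_{δ_m} = S_{μ(δ_m)}(z^{n(δ_m)}_{δ_m})`
of the nonstationary preconditioned iteration, stopped by the discrepancy principle,
converge to the solution of `Kz = g` closest to the starting vector `z⁰`. -/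
theorem stmt17 {N s : ℕ} (hN : 0 < N) (hs : 0 < s) (hNs : N ≤ s)
    (A C : Matrix (Fin N) (Fin N) ℝ) (hA : IsUnit A) (hCinv : IsUnit C)
    (W : Matrix (Fin s) (Fin N) ℝ)
    (hW : Wᵀ * W = (1 : Matrix (Fin N) (Fin N) ℝ))
    (ρ : ℝ) (hρ0 : 0 < ρ) (hρ1 : ρ < 1 / 2)
    (q : ℝ) (hq0 : 2 * ρ < q) (hq1 : q < 1)
    (hi : ∀ v : EuclideanSpace ℝ (Fin N), ‖mulVecE (C - A) v‖ ≤ ρ * ‖mulVecE A v‖)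
    (μ : ℝ → ℝ) (hμcont : ContinuousOn μ (Set.Ici (0 : ℝ))) (hμ0 : μ 0 = 0)
    (hμnn : ∀ t : ℝ, 0 ≤ t → 0 ≤ μ t)
    (hii : ∀ δ' : ℝ, 0 < δ' → ∀ u : EuclideanSpace ℝ (Fin s),
      ‖mulVecE (C * Wᵀ) (u - soft (μ δ') u)‖ ≤ ρ * δ')
    (x : EuclideanSpace ℝ (Fin s))
    (z0 : EuclideanSpace ℝ (Fin s)) (hz0ns : mulVecE (A * Wᵀ) z0 ≠ mulVecE (A * Wᵀ) x)
    (δm : ℕ → ℝ) (hδpos : ∀ m, 0 < δm m) (hδto : Tendsto δm atTop (nhds 0))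
    (gδ : ℕ → EuclideanSpace ℝ (Fin N))
    (hgδ : ∀ m, ‖gδ m - mulVecE (A * Wᵀ) x‖ ≤ δm m)
    (z : ℕ → ℕ → EuclideanSpace ℝ (Fin s)) (r : ℕ → ℕ → EuclideanSpace ℝ (Fin N))
    (αs : ℕ → ℕ → ℝ) (nstop : ℕ → ℕ)
    (hz0 : ∀ m, z m 0 = z0)
    (hrdef : ∀ m n, r m n = gδ m - mulVecE (A * Wᵀ) (soft (μ (δm m)) (z m n)))
    (hbig : ∀ m, ∀ n < nstop m, ‖r m n‖ > ((1 + 2 * ρ) / (1 - 2 * ρ)) * δm m)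
    (hαpos : ∀ m, ∀ n < nstop m, 0 < αs m n)
    (hαeq : ∀ m, ∀ n < nstop m,
      αs m n * ‖mulVecE (C * Cᵀ + αs m n • (1 : Matrix (Fin N) (Fin N) ℝ))⁻¹ (r m n)‖ =
        max q (2 * ρ + (1 + ρ) / (‖r m n‖ / δm m)) * ‖r m n‖)
    (hstep : ∀ m, ∀ n < nstop m, z m (n + 1) =
      z m n + mulVecE (W * Cᵀ * (C * Cᵀ + αs m n • (1 : Matrix (Fin N) (Fin N) ℝ))⁻¹) (r m n))
    (hstop : ∀ m, ‖r m (nstop m)‖ ≤ ((1 + 2 * ρ) / (1 - 2 * ρ)) * δm m) :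
    ∃ zstar : EuclideanSpace ℝ (Fin s),
      mulVecE (A * Wᵀ) zstar = mulVecE (A * Wᵀ) x ∧
      (∀ w : EuclideanSpace ℝ (Fin s),
        mulVecE (A * Wᵀ) w = mulVecE (A * Wᵀ) x → ‖zstar - z0‖ ≤ ‖w - z0‖) ∧
      Tendsto (fun m => soft (μ (δm m)) (z m (nstop m))) atTop (nhds zstar) := by
  classical
  set g : EuclideanSpace ℝ (Fin N) := mulVecE (A * Wᵀ) x with hg
  set τ : ℝ := (1 + 2 * ρ) / (1 - 2 * ρ) with hτ
  have hAdet : IsUnit A.det := (Matrix.isUnit_iff_isUnit_det A).mp hA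
  have hAiA : A⁻¹ * A = 1 := Matrix.nonsing_inv_mul A hAdet
  have hAAi : A * A⁻¹ = 1 := Matrix.mul_nonsing_inv A hAdet
  have hWtW : ∀ c : EuclideanSpace ℝ (Fin N), mulVecE Wᵀ (mulVecE W c) = c := by
    intro c; rw [← mulVecE_mul, hW, mulVecE_one]
  have hKW : ∀ v : EuclideanSpace ℝ (Fin s),
      mulVecE (A * Wᵀ) v = mulVecE A (mulVecE Wᵀ v) := fun v => mulVecE_mul A Wᵀ v
  set c0 : EuclideanSpace ℝ (Fin N) := mulVecE A⁻¹ g - mulVecE Wᵀ z0 with hc0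
  set zstar : EuclideanSpace ℝ (Fin s) := z0 + mulVecE W c0 with hzstar
  have hWtzstar : mulVecE Wᵀ zstar = mulVecE A⁻¹ g := by
    rw [hzstar, mulVecE_add, hWtW, hc0]; abel
  have hKzstar : mulVecE (A * Wᵀ) zstar = g := by
    rw [hKW, hWtzstar, ← mulVecE_mul, hAAi, mulVecE_one]
  have hWnn : (0 : ℝ) ≤ specNorm W := norm_nonneg _
  have hWtnn : (0 : ℝ) ≤ specNorm Wᵀ := norm_nonneg _
  have hAinn : (0 : ℝ) ≤ specNorm A⁻¹ := norm_nonneg _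
  refine ⟨zstar, hKzstar, ?_, ?_⟩
  · -- minimality
    intro w hw
    have hWtw : mulVecE Wᵀ w = mulVecE A⁻¹ g := by
      have h1 : mulVecE A⁻¹ (mulVecE (A * Wᵀ) w) = mulVecE A⁻¹ g := by rw [hw]
      rwa [hKW, ← mulVecE_mul, hAiA, mulVecE_one] at h1
    have horth : inner (𝕜 := ℝ) (w - zstar) (mulVecE W c0) = 0 := by
      rw [inner_mulVecE, mulVecE_sub, hWtzstar, hWtw, sub_self, inner_zero_left]
    have hdecomp : w - z0 = (w - zstar) + mulVecE W c0 := by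
      rw [hzstar]; abel
    have hpyth : ‖w - z0‖ ^ 2 =
        ‖w - zstar‖ ^ 2 + 2 * inner (𝕜 := ℝ) (w - zstar) (mulVecE W c0) +
          ‖mulVecE W c0‖ ^ 2 := by
      rw [hdecomp]; exact norm_add_sq_real _ _
    have h2 : ‖zstar - z0‖ = ‖mulVecE W c0‖ := by rw [hzstar]; congr 1; abel
    rw [h2]
    have hle : ‖mulVecE W c0‖ ^ 2 ≤ ‖w - z0‖ ^ 2 := by
      rw [hpyth, horth]; nlinarith [sq_nonneg ‖w - zstar‖]
    by_contra hcon
    push_neg at hcon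
    nlinarith [norm_nonneg (w - z0), norm_nonneg (mulVecE W c0)]
  · -- convergence
    have hrange : ∀ mm nn, nn ≤ nstop mm → ∃ c, z mm nn = z0 + mulVecE W c := by
      intro mm nn
      induction nn with
      | zero => intro _; exact ⟨0, by rw [hz0, mulVecE_zero, add_zero]⟩
      | succ nn ih =>
        intro hle
        obtain ⟨c, hc⟩ := ih (le_of_lt (Nat.lt_of_succ_le hle))
        refine ⟨c + mulVecE (Cᵀ * (C * Cᵀ + αs mm nn • (1 : Matrix (Fin N) (Fin N) ℝ))⁻¹)
          (r mm nn), ?_⟩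
        rw [hstep mm nn (Nat.lt_of_succ_le hle), hc, mulVecE_add, Matrix.mul_assoc, mulVecE_mul]
        abel
    have hμδ : Tendsto (fun mm => μ (δm mm)) atTop (nhds 0) := by
      have h1 : Tendsto μ (nhdsWithin 0 (Set.Ici 0)) (nhds (μ 0)) :=
        hμcont 0 Set.self_mem_Ici
      rw [hμ0] at h1
      apply h1.comp
      rw [tendsto_nhdsWithin_iff]
      exact ⟨hδto, Filter.Eventually.of_forall fun mm => (hδpos mm).le⟩
    rw [tendsto_iff_norm_sub_tendsto_zero]
    set Bm : ℕ → ℝ := fun mm => Real.sqrt s * μ (δm mm) +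
      specNorm W * (specNorm Wᵀ * (Real.sqrt s * μ (δm mm)) +
        specNorm A⁻¹ * (δm mm + τ * δm mm)) with hBm
    have tB : Tendsto Bm atTop (nhds 0) := by
      have t1 : Tendsto (fun mm => Real.sqrt s * μ (δm mm)) atTop (nhds 0) := by
        simpa using hμδ.const_mul (Real.sqrt s)
      have t2 : Tendsto (fun mm => δm mm + τ * δm mm) atTop (nhds 0) := by
        simpa using hδto.add (hδto.const_mul τ)
      have t3 : Tendsto (fun mm => specNorm Wᵀ * (Real.sqrt s * μ (δm mm)) +
          specNorm A⁻¹ * (δm mm + τ * δm mm)) atTop (nhds 0) := by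
        simpa using (t1.const_mul (specNorm Wᵀ)).add (t2.const_mul (specNorm A⁻¹))
      simpa [hBm] using t1.add (t3.const_mul (specNorm W))
    refine squeeze_zero (fun mm => norm_nonneg _) ?_ tB
    intro mm
    set μm : ℝ := μ (δm mm) with hμm
    have hμmnn : 0 ≤ μm := hμnn _ (hδpos mm).le
    set zn : EuclideanSpace ℝ (Fin s) := z mm (nstop mm) with hzn
    set xm : EuclideanSpace ℝ (Fin s) := soft μm zn with hxm
    obtain ⟨c, hc⟩ := hrange mm (nstop mm) le_rfl
    rw [← hzn] at hc
    have h1 : ‖xm - zn‖ ≤ Real.sqrt s * μm := norm_soft_sub_le μm hμmnn zn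
    have e1 : mulVecE Wᵀ zn - mulVecE A⁻¹ g = c - c0 := by
      rw [hc, mulVecE_add, hWtW, hc0]; abel
    have e2 : zn - zstar = mulVecE W (c - c0) := by
      rw [hc, hzstar, mulVecE_sub W c c0]; abel
    have hzz : zn - zstar = mulVecE W (mulVecE Wᵀ zn - mulVecE A⁻¹ g) := by
      rw [e1]; exact e2
    have e3 : mulVecE Wᵀ zn - mulVecE A⁻¹ g =
        mulVecE Wᵀ (zn - xm) + (mulVecE Wᵀ xm - mulVecE A⁻¹ g) := by
      rw [mulVecE_sub]; abel
    have e4 : mulVecE A⁻¹ (mulVecE (A * Wᵀ) xm - g) = mulVecE Wᵀ xm - mulVecE A⁻¹ g := by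
      rw [mulVecE_sub]
      congr 1
      rw [hKW xm, ← mulVecE_mul A⁻¹ A, hAiA, mulVecE_one]
    have e5 : mulVecE (A * Wᵀ) xm - g = (gδ mm - g) - r mm (nstop mm) := by
      rw [hrdef mm (nstop mm)]
      rw [hxm, hμm, hzn]
      abel
    have h3a : ‖mulVecE Wᵀ (zn - xm)‖ ≤ specNorm Wᵀ * (Real.sqrt s * μm) := by
      refine (mulVecE_norm_le _ _).trans ?_
      apply mul_le_mul_of_nonneg_left _ hWtnn
      rw [norm_sub_rev]; exact h1
    have h3b : ‖mulVecE Wᵀ xm - mulVecE A⁻¹ g‖ ≤ specNorm A⁻¹ * (δm mm + τ * δm mm) := by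
      rw [← e4]
      refine (mulVecE_norm_le _ _).trans ?_
      apply mul_le_mul_of_nonneg_left _ hAinn
      rw [e5]
      exact (norm_sub_le _ _).trans (add_le_add (hgδ mm) (hstop mm))
    have h3 : ‖mulVecE Wᵀ zn - mulVecE A⁻¹ g‖ ≤
        specNorm Wᵀ * (Real.sqrt s * μm) + specNorm A⁻¹ * (δm mm + τ * δm mm) := by
      rw [e3]; exact (norm_add_le _ _).trans (add_le_add h3a h3b)
    have h2 : ‖zn - zstar‖ ≤
        specNorm W * (specNorm Wᵀ * (Real.sqrt s * μm) +
          specNorm A⁻¹ * (δm mm + τ * δm mm)) := by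
      rw [hzz]
      exact (mulVecE_norm_le _ _).trans (mul_le_mul_of_nonneg_left h3 hWnn)
    have htri : ‖xm - zstar‖ ≤ ‖xm - zn‖ + ‖zn - zstar‖ :=
      norm_sub_le_norm_sub_add_norm_sub xm zn zstar
    calc ‖soft (μ (δm mm)) (z mm (nstop mm)) - zstar‖ = ‖xm - zstar‖ := by rw [hxm, hμm, hzn]
      _ ≤ ‖xm - zn‖ + ‖zn - zstar‖ := htri
      _ ≤ Bm mm := by rw [hBm]; exact add_le_add h1 h2
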